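/- For any [n,k,d] code instantiating the product topology T_{m×ℓ}(a,b) (every column satisfies a parity checks with fixed coefficients, every row satisfies b parity checks with fixed coefficients), the minimum distance satisfies d ≤ (a+1)(b+1). -/

import Mathlib

lemma aux_sparse {F : Type*} [Field F] [DecidableEq F] {m a : ℕ}
    (α : Fin a → Fin m → F)
    (hne : ∃ v : Fin m → F, v ≠ 0 ∧ ∀ u, ∑ i, α u i * v i = 0) :
    ∃ v : Fin m → F, v ≠ 0 ∧ (∀ u, ∑ i, α u i * v i = 0) ∧
      (Finset.univ.filter (fun i => v i ≠ 0)).card ≤ a + 1 := by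
  by_cases hm : m ≤ a + 1
  · obtain ⟨v, hv0, hv⟩ := hne
    refine ⟨v, hv0, hv, ?_⟩
    calc (Finset.univ.filter (fun i => v i ≠ 0)).card
        ≤ (Finset.univ : Finset (Fin m)).card := Finset.card_filter_le _ _
      _ = m := by simp
      _ ≤ a + 1 := hm
  · push_neg at hm
    have h : a + 1 ≤ m := le_of_lt hm
    set f : (Fin (a+1) → F) →ₗ[F] (Fin a → F) :=
      LinearMap.pi (fun u => ∑ t : Fin (a+1), (α u (Fin.castLE h t)) • (LinearMap.proj t))
    have hker : LinearMap.ker f ≠ ⊥ := by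
      apply LinearMap.ker_ne_bot_of_finrank_lt
      simp [Module.finrank_pi]
    obtain ⟨c, hc, hc0⟩ := Submodule.ne_bot_iff _ |>.mp hker
    have hfc : ∀ u : Fin a, ∑ t : Fin (a+1), α u (Fin.castLE h t) * c t = 0 := by
      intro u
      have := congrFun (LinearMap.mem_ker.mp hc) u
      simpa [f, LinearMap.pi_apply, LinearMap.sum_apply, LinearMap.smul_apply,
        smul_eq_mul] using this
    set v : Fin m → F := fun i => if hi : (i : ℕ) < a + 1 then c ⟨i, hi⟩ else 0 with hv
    have hvc : ∀ t : Fin (a+1), v (Fin.castLE h t) = c t := by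
      intro t
      simp only [hv]; exact dif_pos t.isLt
    have hvz : ∀ i : Fin m, ¬ ((i : ℕ) < a + 1) → v i = 0 := by
      intro i hi; simp only [hv]; exact dif_neg hi
    refine ⟨v, ?_, ?_, ?_⟩
    · intro hveq
      apply hc0
      funext t
      have := congrFun hveq (Fin.castLE h t)
      rw [hvc t] at this
      simpa using this
    · intro u
      have hsub : (Finset.univ : Finset (Fin (a+1))).map (Fin.castLEEmb h) ⊆ Finset.univ :=
        Finset.subset_univ _
      have := Finset.sum_subset hsub (f := fun i => α u i * v i) ?_
      · rw [← this, Finset.sum_map]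
        simpa [Fin.castLEEmb, hvc] using hfc u
      · intro i _ hi
        have : ¬ ((i : ℕ) < a + 1) := by
          intro hlt
          exact hi (Finset.mem_map.mpr ⟨⟨i, hlt⟩, Finset.mem_univ _, by
            simp [Fin.castLEEmb, Fin.castLE]⟩)
        show α u i * v i = 0
        rw [hvz i this, mul_zero]
    · have hsubset : Finset.univ.filter (fun i => v i ≠ 0) ⊆
          (Finset.univ : Finset (Fin (a+1))).map (Fin.castLEEmb h) := by
        intro i hi
        simp only [Finset.mem_filter] at hi
        by_cases hlt : (i : ℕ) < a + 1
        · exact Finset.mem_map.mpr ⟨⟨i, hlt⟩, Finset.mem_univ _, by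
            simp [Fin.castLEEmb, Fin.castLE]⟩
        · exact absurd (hvz i hlt) hi.2
      calc (Finset.univ.filter (fun i => v i ≠ 0)).card
          ≤ ((Finset.univ : Finset (Fin (a+1))).map (Fin.castLEEmb h)).card :=
            Finset.card_le_card hsubset
        _ = a + 1 := by simp

/-- For any code instantiating the product topology `T_{m×ℓ}(a,b)`
(every column satisfies `a` parity checks with fixed coefficients `α`, every row
satisfies `b` parity checks with fixed coefficients `β`), if the code is nonzero then it
contains a nonzero element of Hamming weight at most `(a+1)(b+1)`; hence
`d ≤ (a+1)(b+1)`. -/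
theorem stmt12 {F : Type*} [Field F] [DecidableEq F] {m l a b : ℕ}
    (α : Fin a → Fin m → F) (β : Fin b → Fin l → F)
    (C : Set (Matrix (Fin m) (Fin l) F))
    (hC : ∀ x, x ∈ C ↔
      ((∀ (u : Fin a) (j : Fin l), ∑ i, α u i * x i j = 0) ∧
       (∀ (u : Fin b) (i : Fin m), ∑ j, β u j * x i j = 0)))
    (hne : ∃ x ∈ C, x ≠ 0) :
    ∃ x ∈ C, x ≠ 0 ∧
      ((Finset.univ : Finset (Fin m × Fin l)).filter
        (fun ij => x ij.1 ij.2 ≠ 0)).card ≤ (a + 1) * (b + 1) := by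
  obtain ⟨x, hxC, hx0⟩ := hne
  obtain ⟨hcol, hrow⟩ := (hC x).mp hxC
  -- find a nonzero entry
  have : ∃ i j, x i j ≠ 0 := by
    by_contra hcon
    push_neg at hcon
    exact hx0 (by funext i j; exact hcon i j)
  obtain ⟨i0, j0, hij⟩ := this
  -- column vector
  have hvne : ∃ v : Fin m → F, v ≠ 0 ∧ ∀ u, ∑ i, α u i * v i = 0 :=
    ⟨fun i => x i j0, fun hcon => hij (by simpa using congrFun hcon i0),
      fun u => hcol u j0⟩
  have hwne : ∃ w : Fin l → F, w ≠ 0 ∧ ∀ u, ∑ j, β u j * w j = 0 :=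
    ⟨fun j => x i0 j, fun hcon => hij (by simpa using congrFun hcon j0),
      fun u => hrow u i0⟩
  obtain ⟨v, hv0, hvα, hvcard⟩ := aux_sparse α hvne
  obtain ⟨w, hw0, hwβ, hwcard⟩ := aux_sparse β hwne
  refine ⟨fun i j => v i * w j, ?_, ?_, ?_⟩
  · refine (hC _).mpr ?_
    constructor
    · intro u j
      rw [show ∑ i, α u i * (v i * w j) = (∑ i, α u i * v i) * w j by
        rw [Finset.sum_mul]; exact Finset.sum_congr rfl fun i _ => (mul_assoc _ _ _).symm]
      rw [hvα u, zero_mul]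
    · intro u i
      rw [show ∑ j, β u j * (v i * w j) = v i * (∑ j, β u j * w j) by
        rw [Finset.mul_sum]; exact Finset.sum_congr rfl fun j _ => by ring]
      rw [hwβ u, mul_zero]
  · obtain ⟨i, hi⟩ := Function.ne_iff.mp hv0
    obtain ⟨j, hj⟩ := Function.ne_iff.mp hw0
    intro hcon
    have := congrFun (congrFun hcon i) j
    simp only [Matrix.zero_apply] at this
    exact (mul_ne_zero (by simpa using hi) (by simpa using hj)) this
  · have hsub : (Finset.univ : Finset (Fin m × Fin l)).filter
        (fun ij => v ij.1 * w ij.2 ≠ 0) ⊆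
        (Finset.univ.filter (fun i => v i ≠ 0)) ×ˢ
        (Finset.univ.filter (fun j => w j ≠ 0)) := by
      intro ij hij'
      simp only [Finset.mem_filter, Finset.mem_product] at *
      exact ⟨⟨Finset.mem_univ _, fun h => hij'.2 (by rw [h, zero_mul])⟩,
        ⟨Finset.mem_univ _, fun h => hij'.2 (by rw [h, mul_zero])⟩⟩
    calc ((Finset.univ : Finset (Fin m × Fin l)).filter
          (fun ij => v ij.1 * w ij.2 ≠ 0)).card
        ≤ _ := Finset.card_le_card hsub
      _ = (Finset.univ.filter (fun i => v i ≠ 0)).card *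
          (Finset.univ.filter (fun j => w j ≠ 0)).card := Finset.card_product _ _
      _ ≤ (a + 1) * (b + 1) := Nat.mul_le_mul hvcard hwcard
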